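/- Let G be an ℵ₀-existentially closed group. Then every subgroup of G of cardinality less than ℵ₀ (i.e., every finite subgroup) has nontrivial centralizer in G; more generally, if G is κ-existentially closed then every subgroup of cardinality < κ has nontrivial centralizer in G. -/
import Mathlib


open Cardinal

/-- `s` solves the system of equations `E` and inequations `I` (words in the free
product of `G` with a free group on the variables `V`) in the supergroup given by
the embedding `f : G →* H`. -/
def IsSolution {G H : Type u} [Group G] [Group H] {V : Type u} (f : G →* H)
    (E I : Set (Monoid.Coprod G (FreeGroup V))) (s : V → H) : Prop :=
  (∀ w ∈ E, Monoid.Coprod.lift f (FreeGroup.lift s) w = 1) ∧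
  (∀ w ∈ I, Monoid.Coprod.lift f (FreeGroup.lift s) w ≠ 1)

/-- `G` is `κ`-existentially closed: `|G| ≥ κ` and every system of fewer than `κ`
equations and inequations with coefficients in `G` which is solvable in some
supergroup of `G` is already solvable in `G`. -/
def ExistentiallyClosed (κ : Cardinal.{u}) (G : Type u) [Group G] : Prop :=
  κ ≤ #G ∧
  ∀ (V : Type u) (E I : Set (Monoid.Coprod G (FreeGroup V))),
    #E + #I < κ →
    (∃ (H : Type u) (_ : Group H) (f : G →* H) (s : V → H),
      Function.Injective f ∧ IsSolution f E I s) →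
    ∃ s : V → G, IsSolution (MonoidHom.id G) E I s

/-- In a `κ`-existentially closed group every subgroup of cardinality `< κ`
has nontrivial centralizer. -/
theorem stmt8 (κ : Cardinal.{u}) (hκ : ℵ₀ ≤ κ) (G : Type u) [Group G]
    (hG : ExistentiallyClosed κ G) (H : Subgroup G) (hH : #H < κ) :
    ∃ g : G, g ≠ 1 ∧ g ∈ Subgroup.centralizer (H : Set G) := by

  classical
  obtain ⟨hcard, hec⟩ := hG
  set x : Monoid.Coprod G (FreeGroup PUnit.{u+1}) :=
    Monoid.Coprod.inr (FreeGroup.of PUnit.unit) with hx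
  set E : Set (Monoid.Coprod G (FreeGroup PUnit.{u+1})) :=
    Set.range (fun h : H => Monoid.Coprod.inl (h : G) * x *
      (Monoid.Coprod.inl (h : G))⁻¹ * x⁻¹) with hE
  set I : Set (Monoid.Coprod G (FreeGroup PUnit.{u+1})) := {x} with hI
  have hcardE : #E < κ := lt_of_le_of_lt Cardinal.mk_range_le hH
  have hcardI : #I < κ := lt_of_lt_of_le (by simpa [hI] using Cardinal.one_lt_aleph0) hκ
  have hlt : #E + #I < κ := Cardinal.add_lt_of_lt hκ hcardE hcardI
  have hsol : ∃ (K : Type u) (_ : Group K) (f : G →* K) (s : PUnit.{u+1} → K),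
      Function.Injective f ∧ IsSolution f E I s := by
    refine ⟨G × ULift.{u} (Multiplicative ℤ), inferInstance, MonoidHom.inl _ _,
      fun _ => (1, ULift.up (Multiplicative.ofAdd 1)), ?_, ?_, ?_⟩
    · intro a b hab
      exact congrArg Prod.fst hab
    · rintro w ⟨h, rfl⟩
      simp [hx, Prod.ext_iff, mul_comm]
    · rintro w rfl
      simp [hx, Prod.ext_iff]
      intro h
      exact absurd (congrArg ULift.down h) (by decide)
  obtain ⟨s, hs1, hs2⟩ := hec PUnit E I hlt hsol
  refine ⟨s PUnit.unit, ?_, ?_⟩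
  · have := hs2 x rfl
    simpa [hx] using this
  · rw [Subgroup.mem_centralizer_iff]
    intro h hh
    have := hs1 _ ⟨⟨h, hh⟩, rfl⟩
    simp [hx] at this
    have h2 : h * s PUnit.unit * h⁻¹ = s PUnit.unit := by
      have := mul_eq_one_iff_eq_inv.mp this
      simpa using this
    calc h * s PUnit.unit = (h * s PUnit.unit * h⁻¹) * h := by group
      _ = s PUnit.unit * h := by rw [h2]
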